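/- For each nonzero real number t, define f : SU(2) → ℂ on elements g = (α, β; −conj(β), conj(α)) with |α|² + |β|² = 1 by f(g) = Re(α² + β²). Then for every θ ∈ ℝ, the operator T_θ = P·λ(d_θ)·P on L²(SU(2)) satisfies T_θ f = cos(2θ)·f, where λ is the left regular representation, d_θ = diag(e^{iθ}, e^{−iθ}), and P = ∫_{SO(2)} λ(r_s) ds is the orthogonal projection onto left-SO(2)-invariant functions (SO(2) embedded as {r_s} with normalized Haar measure). Consequently, the operator norm of T_θ − T_{π/4} on L²(SU(2)) is at least |cos(2θ)|. -/

import Mathlib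

open Matrix Real MeasureTheory

/-- r_s = (cos s, −sin s; sin s, cos s) ∈ SU(2). -/
noncomputable def rotC (s : ℝ) : Matrix (Fin 2) (Fin 2) ℂ :=
  !![(Real.cos s : ℂ), -(Real.sin s : ℂ); (Real.sin s : ℂ), (Real.cos s : ℂ)]

/-- d_θ = diag(e^{iθ}, e^{−iθ}) ∈ SU(2). -/
noncomputable def dC (θ : ℝ) : Matrix (Fin 2) (Fin 2) ℂ :=
  !![Complex.exp (Complex.I * θ), 0; 0, Complex.exp (-(Complex.I * θ))]

/-- SU(2) as a set of matrices. -/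
noncomputable def SU2 : Set (Matrix (Fin 2) (Fin 2) ℂ) :=
  {g | g ∈ Matrix.specialUnitaryGroup (Fin 2) ℂ}

/-- The function f(g) = Re(α² + β²) for g = (α, β; −conj β, conj α). -/
noncomputable def fEig (g : Matrix (Fin 2) (Fin 2) ℂ) : ℝ :=
  ((g 0 0) ^ 2 + (g 0 1) ^ 2).re

/-- (T_θ ξ)(x) = (P λ(d_θ) P ξ)(x), written out as a double average over the
subgroup {r_s}, applied to the function `fEig`. -/
noncomputable def TfEig (θ : ℝ) (x : Matrix (Fin 2) (Fin 2) ℂ) : ℝ :=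
  (1 / (2 * π)) ^ 2 *
    ∫ s in (0:ℝ)..(2 * π), ∫ t in (0:ℝ)..(2 * π),
      fEig (rotC (-t) * dC (-θ) * rotC (-s) * x)


noncomputable def eM (θ : ℝ) : ℂ := Complex.exp (-(Complex.I * θ))
noncomputable def eP (θ : ℝ) : ℂ := Complex.exp (Complex.I * θ)

noncomputable def myU (s : ℝ) (x : Matrix (Fin 2) (Fin 2) ℂ) (j : Fin 2) : ℂ :=
  (Real.cos s : ℂ) * x 0 j + (Real.sin s : ℂ) * x 1 j
noncomputable def myV (s : ℝ) (x : Matrix (Fin 2) (Fin 2) ℂ) (j : Fin 2) : ℂ :=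
  -(Real.sin s : ℂ) * x 0 j + (Real.cos s : ℂ) * x 1 j

noncomputable def F1 (θ s : ℝ) (x : Matrix (Fin 2) (Fin 2) ℂ) : ℝ :=
  ((eM θ) ^ 2 * (myU s x 0 ^ 2 + myU s x 1 ^ 2)).re
noncomputable def F2 (θ s : ℝ) (x : Matrix (Fin 2) (Fin 2) ℂ) : ℝ :=
  ((eP θ) ^ 2 * (myV s x 0 ^ 2 + myV s x 1 ^ 2)).re
noncomputable def F3 (θ s : ℝ) (x : Matrix (Fin 2) (Fin 2) ℂ) : ℝ :=
  (2 * eM θ * eP θ * (myU s x 0 * myV s x 0 + myU s x 1 * myV s x 1)).re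

lemma prod_entry (θ s t : ℝ) (x : Matrix (Fin 2) (Fin 2) ℂ) (j : Fin 2) :
    (rotC (-t) * dC (-θ) * rotC (-s) * x) 0 j =
      (Real.cos t : ℂ) * eM θ * myU s x j + (Real.sin t : ℂ) * eP θ * myV s x j := by
  have h : rotC (-t) * dC (-θ) =
      !![(Real.cos t : ℂ) * eM θ, (Real.sin t : ℂ) * eP θ;
         -(Real.sin t : ℂ) * eM θ, (Real.cos t : ℂ) * eP θ] := by
    rw [rotC, dC, Matrix.mul_fin_two]
    norm_num [eM, eP, Real.cos_neg, Real.sin_neg, mul_neg]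
  rw [mul_assoc (rotC (-t) * dC (-θ)), h, Matrix.mul_apply, Fin.sum_univ_two]
  have h0 : (rotC (-s) * x) 0 j = myU s x j := by
    rw [rotC, Matrix.mul_apply, Fin.sum_univ_two, myU]
    simp [Real.cos_neg, Real.sin_neg]
  have h1 : (rotC (-s) * x) 1 j = myV s x j := by
    rw [rotC, Matrix.mul_apply, Fin.sum_univ_two, myV]
    simp [Real.cos_neg, Real.sin_neg]
  rw [h0, h1]
  simp

lemma integrand_eq (θ s t : ℝ) (x : Matrix (Fin 2) (Fin 2) ℂ) :
    fEig (rotC (-t) * dC (-θ) * rotC (-s) * x) =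
      Real.cos t ^ 2 * F1 θ s x + Real.sin t ^ 2 * F2 θ s x
        + Real.sin t * Real.cos t * F3 θ s x := by
  rw [fEig, prod_entry, prod_entry, F1, F2, F3,
    ← Complex.re_ofReal_mul, ← Complex.re_ofReal_mul, ← Complex.re_ofReal_mul,
    ← Complex.add_re, ← Complex.add_re]
  congr 1
  push_cast
  ring

noncomputable def G1 (θ : ℝ) (x : Matrix (Fin 2) (Fin 2) ℂ) : ℝ :=
  ((eM θ) ^ 2 * (x 0 0 ^ 2 + x 0 1 ^ 2) + (eP θ) ^ 2 * (x 1 0 ^ 2 + x 1 1 ^ 2)).re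
noncomputable def G2 (θ : ℝ) (x : Matrix (Fin 2) (Fin 2) ℂ) : ℝ :=
  ((eM θ) ^ 2 * (x 1 0 ^ 2 + x 1 1 ^ 2) + (eP θ) ^ 2 * (x 0 0 ^ 2 + x 0 1 ^ 2)).re
noncomputable def G3 (θ : ℝ) (x : Matrix (Fin 2) (Fin 2) ℂ) : ℝ :=
  (2 * (eM θ) ^ 2 * (x 0 0 * x 1 0 + x 0 1 * x 1 1)
    - 2 * (eP θ) ^ 2 * (x 0 0 * x 1 0 + x 0 1 * x 1 1)).re

lemma F12_eq (θ s : ℝ) (x : Matrix (Fin 2) (Fin 2) ℂ) :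
    F1 θ s x + F2 θ s x =
      Real.cos s ^ 2 * G1 θ x + Real.sin s ^ 2 * G2 θ x
        + Real.sin s * Real.cos s * G3 θ x := by
  rw [F1, F2, G1, G2, G3, myU, myU, myV, myV,
    ← Complex.re_ofReal_mul, ← Complex.re_ofReal_mul, ← Complex.re_ofReal_mul,
    ← Complex.add_re, ← Complex.add_re, ← Complex.add_re]
  congr 1
  push_cast
  ring

lemma cont_F1 (θ : ℝ) (x : Matrix (Fin 2) (Fin 2) ℂ) : Continuous (fun s => F1 θ s x) := by
  unfold F1 myU; fun_prop
lemma cont_F2 (θ : ℝ) (x : Matrix (Fin 2) (Fin 2) ℂ) : Continuous (fun s => F2 θ s x) := by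
  unfold F2 myV; fun_prop
lemma cont_F3 (θ : ℝ) (x : Matrix (Fin 2) (Fin 2) ℂ) : Continuous (fun s => F3 θ s x) := by
  unfold F3 myU myV; fun_prop

lemma inner_int (θ s : ℝ) (x : Matrix (Fin 2) (Fin 2) ℂ) :
    ∫ t in (0:ℝ)..(2 * π), fEig (rotC (-t) * dC (-θ) * rotC (-s) * x) =
      π * F1 θ s x + π * F2 θ s x := by
  have hc2 : ∫ t in (0:ℝ)..(2 * π), Real.cos t ^ 2 = π := by
    rw [integral_cos_sq]; simp [Real.sin_two_pi, Real.cos_two_pi]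
  have hs2 : ∫ t in (0:ℝ)..(2 * π), Real.sin t ^ 2 = π := by
    rw [integral_sin_sq]; simp [Real.sin_two_pi, Real.cos_two_pi]
  have hsc : ∫ t in (0:ℝ)..(2 * π), Real.sin t * Real.cos t = 0 := by
    rw [integral_sin_mul_cos₁]; simp [Real.sin_two_pi]
  have i1 : IntervalIntegrable (fun t => Real.cos t ^ 2 * F1 θ s x) volume 0 (2 * π) := by
    apply Continuous.intervalIntegrable; fun_prop
  have i2 : IntervalIntegrable (fun t => Real.sin t ^ 2 * F2 θ s x) volume 0 (2 * π) := by
    apply Continuous.intervalIntegrable; fun_prop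
  have i3 : IntervalIntegrable (fun t => Real.sin t * Real.cos t * F3 θ s x)
      volume 0 (2 * π) := by
    apply Continuous.intervalIntegrable; fun_prop
  calc ∫ t in (0:ℝ)..(2 * π), fEig (rotC (-t) * dC (-θ) * rotC (-s) * x)
      = ∫ t in (0:ℝ)..(2 * π), (Real.cos t ^ 2 * F1 θ s x + Real.sin t ^ 2 * F2 θ s x
          + Real.sin t * Real.cos t * F3 θ s x) := by
        apply intervalIntegral.integral_congr; intro t _; exact integrand_eq θ s t x
    _ = π * F1 θ s x + π * F2 θ s x := by
        rw [intervalIntegral.integral_add (i1.add i2) i3, intervalIntegral.integral_add i1 i2,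
          intervalIntegral.integral_mul_const, intervalIntegral.integral_mul_const,
          intervalIntegral.integral_mul_const, hc2, hs2, hsc]
        ring

lemma exp_sq_sum (θ : ℝ) : (eM θ) ^ 2 + (eP θ) ^ 2 = (2 * Real.cos (2 * θ) : ℂ) := by
  rw [eM, eP, ← Complex.exp_nat_mul, ← Complex.exp_nat_mul]
  have h1 : (2 : ℕ) * -(Complex.I * θ) = (-(2 * θ) : ℝ) * Complex.I := by push_cast; ring
  have h2 : (2 : ℕ) * (Complex.I * θ) = ((2 * θ : ℝ) : ℂ) * Complex.I := by push_cast; ring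
  rw [h1, h2, Complex.exp_mul_I, Complex.exp_mul_I]
  push_cast
  simp [Complex.cos_neg, Complex.sin_neg, ← Complex.ofReal_cos]
  ring

lemma Gsum (θ : ℝ) (x : Matrix (Fin 2) (Fin 2) ℂ)
    (h10 : x 1 0 = -(starRingEnd ℂ) (x 0 1)) (h11 : x 1 1 = (starRingEnd ℂ) (x 0 0)) :
    G1 θ x + G2 θ x = 4 * Real.cos (2 * θ) * fEig x := by
  have hB : x 1 0 ^ 2 + x 1 1 ^ 2 = (starRingEnd ℂ) (x 0 0 ^ 2 + x 0 1 ^ 2) := by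
    rw [h10, h11]; push_cast [map_add, map_pow]; ring
  set A : ℂ := x 0 0 ^ 2 + x 0 1 ^ 2 with hA
  rw [G1, G2, hB, ← Complex.add_re]
  have : (eM θ) ^ 2 * A + (eP θ) ^ 2 * (starRingEnd ℂ) A
      + ((eM θ) ^ 2 * (starRingEnd ℂ) A + (eP θ) ^ 2 * A)
      = ((eM θ) ^ 2 + (eP θ) ^ 2) * (A + (starRingEnd ℂ) A) := by ring
  rw [this, exp_sq_sum, Complex.add_conj, fEig, ← hA]
  simp [Complex.mul_re, Complex.ofReal_re, Complex.ofReal_im]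
  rw [show ((2 : ℂ) * θ) = ((2 * θ : ℝ) : ℂ) by push_cast; ring, ← Complex.ofReal_cos,
    Complex.ofReal_re]
  ring

lemma su2_mul_star {x : Matrix (Fin 2) (Fin 2) ℂ} (hx : x ∈ SU2) : x * star x = 1 :=
  Matrix.mem_unitaryGroup_iff.1 ((Matrix.mem_specialUnitaryGroup_iff.1 hx).1)

lemma su2_star_mul {x : Matrix (Fin 2) (Fin 2) ℂ} (hx : x ∈ SU2) : star x * x = 1 :=
  Matrix.mem_unitaryGroup_iff'.1 ((Matrix.mem_specialUnitaryGroup_iff.1 hx).1)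

lemma su2_det {x : Matrix (Fin 2) (Fin 2) ℂ} (hx : x ∈ SU2) : x.det = 1 :=
  (Matrix.mem_specialUnitaryGroup_iff.1 hx).2

lemma su2_entries {x : Matrix (Fin 2) (Fin 2) ℂ} (hx : x ∈ SU2) :
    x 1 0 = -(starRingEnd ℂ) (x 0 1) ∧ x 1 1 = (starRingEnd ℂ) (x 0 0) := by
  have hadj : star x = x.adjugate := by
    calc star x = star x * (x * x.adjugate) := by
          rw [Matrix.mul_adjugate, su2_det hx]; simp
      _ = (star x * x) * x.adjugate := by rw [mul_assoc]
      _ = x.adjugate := by rw [su2_star_mul hx, one_mul]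
  have h2 := Matrix.eta_fin_two x
  have hadj2 : x.adjugate = !![x 1 1, -(x 0 1); -(x 1 0), x 0 0] := by
    rw [h2, Matrix.adjugate_fin_two]
  have h01 := congrFun (congrFun hadj 0) 1
  have h00 := congrFun (congrFun hadj 0) 0
  rw [hadj2] at h01 h00
  simp only [Matrix.star_apply, Matrix.cons_val_zero, Matrix.cons_val_one, Matrix.head_cons,
    RCLike.star_def] at h01 h00
  constructor
  · have h := congrArg (starRingEnd ℂ) h01
    simp at h
    exact h
  · exact h00.symm

lemma part1 (θ : ℝ) (x : Matrix (Fin 2) (Fin 2) ℂ) (hx : x ∈ SU2) :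
    ((1 / (2 * π)) ^ 2 *
      ∫ s in (0:ℝ)..(2 * π), ∫ t in (0:ℝ)..(2 * π),
        fEig (rotC (-t) * dC (-θ) * rotC (-s) * x)) = Real.cos (2 * θ) * fEig x := by
  obtain ⟨h10, h11⟩ := su2_entries hx
  have hc2 : ∫ s in (0:ℝ)..(2 * π), Real.cos s ^ 2 = π := by
    rw [integral_cos_sq]; simp [Real.sin_two_pi, Real.cos_two_pi]
  have hs2 : ∫ s in (0:ℝ)..(2 * π), Real.sin s ^ 2 = π := by
    rw [integral_sin_sq]; simp [Real.sin_two_pi, Real.cos_two_pi]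
  have hsc : ∫ s in (0:ℝ)..(2 * π), Real.sin s * Real.cos s = 0 := by
    rw [integral_sin_mul_cos₁]; simp [Real.sin_two_pi]
  have i1 : IntervalIntegrable (fun s => Real.cos s ^ 2 * G1 θ x) volume 0 (2 * π) := by
    apply Continuous.intervalIntegrable; fun_prop
  have i2 : IntervalIntegrable (fun s => Real.sin s ^ 2 * G2 θ x) volume 0 (2 * π) := by
    apply Continuous.intervalIntegrable; fun_prop
  have i3 : IntervalIntegrable (fun s => Real.sin s * Real.cos s * G3 θ x)
      volume 0 (2 * π) := by
    apply Continuous.intervalIntegrable; fun_prop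
  have houter : (∫ s in (0:ℝ)..(2 * π), ∫ t in (0:ℝ)..(2 * π),
      fEig (rotC (-t) * dC (-θ) * rotC (-s) * x))
      = π * (π * (4 * Real.cos (2 * θ) * fEig x)) := by
    calc (∫ s in (0:ℝ)..(2 * π), ∫ t in (0:ℝ)..(2 * π),
        fEig (rotC (-t) * dC (-θ) * rotC (-s) * x))
        = ∫ s in (0:ℝ)..(2 * π), π * (F1 θ s x + F2 θ s x) := by
          apply intervalIntegral.integral_congr; intro s _
          simp only [inner_int]; ring
      _ = π * ∫ s in (0:ℝ)..(2 * π), (F1 θ s x + F2 θ s x) := by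
          rw [intervalIntegral.integral_const_mul]
      _ = π * ∫ s in (0:ℝ)..(2 * π), (Real.cos s ^ 2 * G1 θ x + Real.sin s ^ 2 * G2 θ x
            + Real.sin s * Real.cos s * G3 θ x) := by
          congr 1
          apply intervalIntegral.integral_congr; intro s _
          simp only [F12_eq]
      _ = π * (π * (4 * Real.cos (2 * θ) * fEig x)) := by
          rw [intervalIntegral.integral_add (i1.add i2) i3, intervalIntegral.integral_add i1 i2,
            intervalIntegral.integral_mul_const, intervalIntegral.integral_mul_const,
            intervalIntegral.integral_mul_const, hc2, hs2, hsc, ← Gsum θ x h10 h11]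
          ring
  rw [houter]
  have hπ : π ≠ 0 := Real.pi_ne_zero
  field_simp
  ring

lemma cont_fEig : Continuous fEig := by
  unfold fEig
  have h00 : Continuous fun g : Matrix (Fin 2) (Fin 2) ℂ => g 0 0 :=
    (continuous_apply 0).comp (continuous_apply 0)
  have h01 : Continuous fun g : Matrix (Fin 2) (Fin 2) ℂ => g 0 1 :=
    (continuous_apply 1).comp (continuous_apply 0)
  exact Complex.continuous_re.comp ((h00.pow 2).add (h01.pow 2))

lemma su2_mul {g x : Matrix (Fin 2) (Fin 2) ℂ} (hg : g ∈ SU2) (hx : x ∈ SU2) :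
    g * x ∈ SU2 := by
  rw [SU2, Set.mem_setOf_eq] at *
  exact mul_mem hg hx

lemma su2_star {x : Matrix (Fin 2) (Fin 2) ℂ} (hx : x ∈ SU2) : star x ∈ SU2 := by
  rw [SU2, Set.mem_setOf_eq, Matrix.mem_specialUnitaryGroup_iff] at *
  constructor
  · rw [Matrix.mem_unitaryGroup_iff, star_star]
    exact su2_star_mul hx
  · rw [Matrix.star_eq_conjTranspose, Matrix.det_conjTranspose, hx.2, star_one]

lemma fEig_one : fEig 1 = 1 := by
  norm_num [fEig, Matrix.one_apply]

lemma fEig_bound {y : Matrix (Fin 2) (Fin 2) ℂ} (hy : y ∈ SU2) : |fEig y| ≤ 1 := by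
  have h := su2_mul_star hy
  have h00 := congrFun (congrFun h 0) 0
  simp only [Matrix.mul_apply, Fin.sum_univ_two, Matrix.star_apply, Matrix.one_apply_eq,
    RCLike.star_def] at h00
  rw [Complex.mul_conj, Complex.mul_conj] at h00
  have hn : Complex.normSq (y 0 0) + Complex.normSq (y 0 1) = 1 := by exact_mod_cast h00
  calc |fEig y| ≤ ‖y 0 0 ^ 2 + y 0 1 ^ 2‖ := Complex.abs_re_le_norm _
    _ ≤ ‖y 0 0 ^ 2‖ + ‖y 0 1 ^ 2‖ := norm_add_le _ _
    _ = Complex.normSq (y 0 0) + Complex.normSq (y 0 1) := by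
        rw [norm_pow, norm_pow, Complex.sq_norm, Complex.sq_norm]
    _ = 1 := hn

/-- T_θ f = cos(2θ)·f on SU(2), and consequently, with respect to any Haar
(left-invariant) probability measure μ on SU(2), the norm of T_θ − T_{π/4}
on L²(SU(2)) is at least |cos(2θ)|. -/

theorem T_theta_eigenfunction_and_norm_lower_bound
    [MeasurableSpace (Matrix (Fin 2) (Fin 2) ℂ)]
    [BorelSpace (Matrix (Fin 2) (Fin 2) ℂ)]
    (μ : Measure (Matrix (Fin 2) (Fin 2) ℂ)) [IsProbabilityMeasure μ]
    (hsupp : μ SU2ᶜ = 0)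
    (hinv : ∀ g ∈ SU2, ∀ A : Set (Matrix (Fin 2) (Fin 2) ℂ), MeasurableSet A →
      μ ((fun x => g * x) ⁻¹' A) = μ A) :
    (∀ θ : ℝ, ∀ x ∈ SU2, TfEig θ x = Real.cos (2 * θ) * fEig x) ∧
      (0 < ∫ x, fEig x ^ 2 ∂μ) ∧
      (∀ θ : ℝ,
        |Real.cos (2 * θ)| * Real.sqrt (∫ x, fEig x ^ 2 ∂μ) ≤
          Real.sqrt (∫ x, (TfEig θ x - TfEig (π / 4) x) ^ 2 ∂μ)) := by
  have hpart1 : ∀ θ : ℝ, ∀ x ∈ SU2, TfEig θ x = Real.cos (2 * θ) * fEig x := by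
    intro θ x hx
    rw [TfEig]
    exact part1 θ x hx
  have haeS : ∀ᵐ x ∂μ, x ∈ SU2 := by
    rw [MeasureTheory.ae_iff]
    exact hsupp
  have hIntg : ∀ g ∈ SU2, Integrable (fun x => fEig (g * x) ^ 2) μ := by
    intro g hg
    have hcontf : Continuous (fun x : Matrix (Fin 2) (Fin 2) ℂ => fEig (g * x) ^ 2) :=
      (cont_fEig.comp (continuous_const.matrix_mul continuous_id)).pow 2
    refine Integrable.mono' (integrable_const 1) hcontf.aestronglyMeasurable ?_
    filter_upwards [haeS] with x hx
    have hb := fEig_bound (su2_mul hg hx)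
    rw [Real.norm_eq_abs, abs_pow]
    nlinarith [abs_nonneg (fEig (g * x))]
  have hint_eq : ∀ g ∈ SU2, (∫ x, fEig (g * x) ^ 2 ∂μ) = ∫ x, fEig x ^ 2 ∂μ := by
    intro g hg
    have hcont : Continuous (fun x : Matrix (Fin 2) (Fin 2) ℂ => g * x) :=
      continuous_const.matrix_mul continuous_id
    have hconti : Continuous (fun x : Matrix (Fin 2) (Fin 2) ℂ => star g * x) :=
      continuous_const.matrix_mul continuous_id
    let e : Matrix (Fin 2) (Fin 2) ℂ ≃ₜ Matrix (Fin 2) (Fin 2) ℂ :=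
      { toFun := fun x => g * x
        invFun := fun x => star g * x
        left_inv := fun x => by
          simp only [← mul_assoc, su2_star_mul hg, one_mul]
        right_inv := fun x => by
          simp only [← mul_assoc, su2_mul_star hg, one_mul]
        continuous_toFun := hcont
        continuous_invFun := hconti }
    have hmp : MeasurePreserving (fun x : Matrix (Fin 2) (Fin 2) ℂ => g * x) μ μ := by
      refine ⟨hcont.measurable, ?_⟩
      apply Measure.ext
      intro A hA
      rw [Measure.map_apply hcont.measurable hA]
      exact hinv g hg A hA
    exact hmp.integral_comp e.measurableEmbedding (fun x => fEig x ^ 2)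
  have hI0 : 0 ≤ ∫ x, fEig x ^ 2 ∂μ := integral_nonneg fun x => sq_nonneg _
  have hIpos : 0 < ∫ x, fEig x ^ 2 ∂μ := by
    rcases hI0.lt_or_eq with h | h
    · exact h
    · exfalso
      haveI : SecondCountableTopology (Matrix (Fin 2) (Fin 2) ℂ) :=
        inferInstanceAs (SecondCountableTopology ((Fin 2) → (Fin 2) → ℂ))
      obtain ⟨c, hc_count, hc_dense⟩ := TopologicalSpace.exists_countable_dense (↥SU2)
      set D := (Subtype.val '' c : Set (Matrix (Fin 2) (Fin 2) ℂ)) with hD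
      have hD_count : D.Countable := hc_count.image _
      have hD_sub : D ⊆ SU2 := by rintro _ ⟨y, _, rfl⟩; exact y.2
      have hz : ∀ g ∈ D, ∀ᵐ x ∂μ, fEig (g * x) = 0 := by
        intro g hgD
        have hg := hD_sub hgD
        have heq : (∫ x, fEig (g * x) ^ 2 ∂μ) = 0 := by rw [hint_eq g hg, ← h]
        have hz2 := (integral_eq_zero_iff_of_nonneg (fun x => sq_nonneg _) (hIntg g hg)).1 heq
        filter_upwards [hz2] with x hx
        have : fEig (g * x) ^ 2 = 0 := by simpa using hx
        exact pow_eq_zero_iff two_ne_zero |>.1 this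
      have hall : ∀ᵐ x ∂μ, x ∈ SU2 ∧ ∀ g ∈ D, fEig (g * x) = 0 :=
        haeS.and ((MeasureTheory.ae_ball_iff hD_count).2 hz)
      haveI : (MeasureTheory.ae μ).NeBot := by
        rw [MeasureTheory.ae_neBot]
        exact IsProbabilityMeasure.ne_zero μ
      obtain ⟨x0, hx0S, hx0⟩ := hall.exists
      have hcl : SU2 ⊆ closure D := by
        intro y hy
        have hmem : (⟨y, hy⟩ : ↥SU2) ∈ closure c := hc_dense _
        exact map_mem_closure continuous_subtype_val hmem (fun z hz0 => ⟨z, hz0, rfl⟩)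
      have hzero : fEig (star x0 * x0) = 0 := by
        have hcont : Continuous (fun g : Matrix (Fin 2) (Fin 2) ℂ => fEig (g * x0)) :=
          cont_fEig.comp (continuous_id.matrix_mul continuous_const)
        have heqon : Set.EqOn (fun g => fEig (g * x0)) 0 (closure D) :=
          Set.EqOn.closure (fun g hgD => hx0 g hgD) hcont continuous_const
        exact heqon (hcl (su2_star hx0S))
      rw [su2_star_mul hx0S, fEig_one] at hzero
      norm_num at hzero
  refine ⟨hpart1, hIpos, ?_⟩
  intro θ
  have hae2 : (fun x => (TfEig θ x - TfEig (π / 4) x) ^ 2) =ᵐ[μ]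
      (fun x => Real.cos (2 * θ) ^ 2 * fEig x ^ 2) := by
    filter_upwards [haeS] with x hx
    rw [hpart1 θ x hx, hpart1 (π / 4) x hx,
      show 2 * (π / 4) = π / 2 by ring, Real.cos_pi_div_two]
    ring
  rw [MeasureTheory.integral_congr_ae hae2, MeasureTheory.integral_const_mul,
    Real.sqrt_mul (sq_nonneg _), Real.sqrt_sq_eq_abs]
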